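/- Fix an integer N ≥ 1 and σ_w > 0, and let k(y, z) = 2^{−N} ∑_{k=1}^N (N choose k) (1/(σ_w² y)) p_{χ²_k}(z/(σ_w² y)) be the ReLU transition kernel density with σ_b = 0, where p_{χ²_k}(t) = t^{k/2−1} e^{−t/2} / (2^{k/2} Γ(k/2)). Then for every z > 0, ∫_0^∞ k(y, z) y^{−1} dy = (1 − 2^{−N}) z^{−1}. In particular, the eigenvalue of the transition operator corresponding to the eigenfunction y ↦ y^{−1} is 1 − 2^{−N}, independent of σ_w, and it tends to 1 as N → ∞. -/

import Mathlib

open MeasureTheory Filter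

/-- The density of the chi-squared distribution with `k` degrees of freedom:
`p_{χ²_k}(t) = t^(k/2−1) e^(−t/2) / (2^(k/2) Γ(k/2))`. -/
noncomputable def chiSqPDF (k : ℕ) (t : ℝ) : ℝ :=
  t ^ ((k : ℝ) / 2 - 1) * Real.exp (-t / 2)
    / ((2 : ℝ) ^ ((k : ℝ) / 2) * Real.Gamma ((k : ℝ) / 2))

/-- The ReLU layer transition kernel density with `σ_b = 0`:
`k(y, z) = 2^{−N} ∑_{k=1}^N (N choose k) (1/(σw² y)) p_{χ²_k}(z/(σw² y))`. -/
noncomputable def reluKernel (N : ℕ) (σw y z : ℝ) : ℝ :=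
  (2 : ℝ)⁻¹ ^ N * ∑ k ∈ Finset.Icc 1 N,
    (N.choose k : ℝ) * (1 / (σw ^ 2 * y)) * chiSqPDF k (z / (σw ^ 2 * y))

/-- For `N ≥ 1` and `σw > 0`, the function `y ↦ y⁻¹` is an eigenfunction of the
ReLU layer transition operator with `σ_b = 0`, with eigenvalue `1 − 2^{−N}`,
independently of `σw`: for every `z > 0`,
`∫_0^∞ k(y, z) y⁻¹ dy = (1 − 2^{−N}) z⁻¹`. Moreover this eigenvalue tends to
`1` as `N → ∞`. -/
lemma chiSq_integrableOn (k : ℕ) (hk : 1 ≤ k) :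
    IntegrableOn (chiSqPDF k) (Set.Ioi (0:ℝ)) := by
  have hk1 : (1:ℝ) ≤ (k:ℝ) := by exact_mod_cast hk
  have hs : (-1:ℝ) < (k:ℝ)/2 - 1 := by linarith
  have h := (integrableOn_rpow_mul_exp_neg_mul_rpow hs (by norm_num : (0:ℝ) < 1)
      (by norm_num : (0:ℝ) < 1/2)).div_const ((2:ℝ) ^ ((k:ℝ)/2) * Real.Gamma ((k:ℝ)/2))
  refine MeasureTheory.IntegrableOn.congr_fun h (fun t ht => ?_) measurableSet_Ioi
  unfold chiSqPDF
  rw [Real.rpow_one, show -(1/2:ℝ) * t = -t/2 by ring]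

lemma chiSq_integral (k : ℕ) (hk : 1 ≤ k) :
    ∫ t in Set.Ioi (0:ℝ), chiSqPDF k t = 1 := by
  have hk1 : (1:ℝ) ≤ (k:ℝ) := by exact_mod_cast hk
  have ha : (0:ℝ) < (k:ℝ)/2 := by linarith
  have h1 : ∀ t ∈ Set.Ioi (0:ℝ), chiSqPDF k t =
      (t ^ ((k:ℝ)/2 - 1) * Real.exp (-(1/2 * t))) /
        ((2:ℝ) ^ ((k:ℝ)/2) * Real.Gamma ((k:ℝ)/2)) := by
    intro t ht
    unfold chiSqPDF
    rw [show (-t/2 : ℝ) = -(1/2 * t) by ring]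
  rw [setIntegral_congr_fun measurableSet_Ioi h1, integral_div,
    Real.integral_rpow_mul_exp_neg_mul_Ioi ha (by norm_num : (0:ℝ) < 1/2),
    show (1/(1/2):ℝ) = 2 by norm_num]
  have hΓ : 0 < Real.Gamma ((k:ℝ)/2) := Real.Gamma_pos_of_pos ha
  have h2 : (0:ℝ) < (2:ℝ) ^ ((k:ℝ)/2) := Real.rpow_pos_of_pos (by norm_num) _
  field_simp

lemma choose_Icc_sum (N : ℕ) : ∑ k ∈ Finset.Icc 1 N, (N.choose k : ℝ) = 2 ^ N - 1 := by
  have h0 : Finset.Icc 1 N = (Finset.range (N+1)).erase 0 := by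
    ext x
    simp only [Finset.mem_Icc, Finset.mem_erase, Finset.mem_range]
    omega
  rw [h0, Finset.sum_erase_eq_sub (by simp)]
  have h1 : ∑ k ∈ Finset.range (N+1), (N.choose k : ℝ) = 2 ^ N := by
    exact_mod_cast Nat.sum_range_choose N
  rw [h1]
  simp

theorem reluKernel_inv_eigenfunction
    (N : ℕ) (hN : 1 ≤ N) (σw : ℝ) (hσw : 0 < σw) :
    (∀ z : ℝ, 0 < z →
        ∫ y in Set.Ioi (0 : ℝ), reluKernel N σw y z * y⁻¹
          = (1 - (2 : ℝ)⁻¹ ^ N) * z⁻¹)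
      ∧ Tendsto (fun n : ℕ => 1 - (2 : ℝ)⁻¹ ^ n) atTop (nhds 1) := by
  constructor
  · intro z hz
    have hc : 0 < σw ^ 2 := by positivity
    set c := σw ^ 2 with hcdef
    set H : ℝ → ℝ := fun s => (2:ℝ)⁻¹ ^ N * ∑ k ∈ Finset.Icc 1 N,
      ((N.choose k : ℝ) * (1/c)) * chiSqPDF k s with hH
    have hzc : 0 < z / c := div_pos hz hc
    -- Step 1: substitution y ↦ y⁻¹
    have h1 : ∫ y in Set.Ioi (0:ℝ), reluKernel N σw y z * y⁻¹
        = ∫ t in Set.Ioi (0:ℝ), H (z / c * t) := by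
      rw [← integral_comp_rpow_Ioi (fun t => H (z / c * t))
        (by norm_num : (-1:ℝ) ≠ 0)]
      refine setIntegral_congr_fun measurableSet_Ioi (fun y hy => ?_)
      have hy0 : (0:ℝ) < y := hy
      have hr1 : y ^ (-1:ℝ) = y⁻¹ := by
        rw [Real.rpow_neg hy0.le, Real.rpow_one]
      have hr2 : y ^ ((-1:ℝ) - 1) = y⁻¹ * y⁻¹ := by
        rw [show ((-1:ℝ) - 1) = (-1) + (-1) by norm_num, Real.rpow_add hy0, hr1]
      simp only [reluKernel, hH, smul_eq_mul, hr1, hr2, abs_neg, abs_one]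
      have harg : z / c * y⁻¹ = z / (c * y) := by
        field_simp
      simp only [harg, one_div, mul_inv, Finset.mul_sum, Finset.sum_mul]
      refine Finset.sum_congr rfl (fun k _ => by ring)
    -- Step 2: scaling t ↦ (z/c) t
    have h2 : ∫ t in Set.Ioi (0:ℝ), H (z / c * t)
        = (z / c)⁻¹ * ∫ s in Set.Ioi (0:ℝ), H s := by
      have := integral_comp_mul_left_Ioi H 0 hzc
      simpa [mul_zero] using this
    -- Step 3: integral of H
    have h3 : ∫ s in Set.Ioi (0:ℝ), H s
        = (2:ℝ)⁻¹ ^ N * ((1/c) * ((2:ℝ) ^ N - 1)) := by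
      simp only [hH]
      rw [MeasureTheory.integral_const_mul,
        MeasureTheory.integral_finset_sum _ (fun k hk => by
          refine ((chiSq_integrableOn k (Finset.mem_Icc.mp hk).1).const_mul _))]
      have : ∀ k ∈ Finset.Icc 1 N,
          ∫ s in Set.Ioi (0:ℝ), ((N.choose k : ℝ) * (1/c)) * chiSqPDF k s
            = (N.choose k : ℝ) * (1/c) := by
        intro k hk
        rw [MeasureTheory.integral_const_mul, chiSq_integral k (Finset.mem_Icc.mp hk).1,
          mul_one]
      rw [Finset.sum_congr rfl this]
      rw [show ∑ k ∈ Finset.Icc 1 N, (N.choose k : ℝ) * (1/c)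
          = (∑ k ∈ Finset.Icc 1 N, (N.choose k : ℝ)) * (1/c) from
        (Finset.sum_mul ..).symm, choose_Icc_sum N]
      ring
    rw [h1, h2, h3]
    have hpow : (2:ℝ)⁻¹ ^ N * (2:ℝ) ^ N = 1 := by
      rw [← mul_pow]
      norm_num
    have hz' : z ≠ 0 := hz.ne'
    have hc' : c ≠ 0 := hc.ne'
    field_simp
    ring_nf
    have hpow' : (1/2:ℝ) ^ N * 2 ^ N = 1 := by
      rw [← mul_pow]
      norm_num
    linarith
  · have h := tendsto_pow_atTop_nhds_zero_of_lt_one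
      (by norm_num : (0:ℝ) ≤ 2⁻¹) (by norm_num : (2:ℝ)⁻¹ < 1)
    simpa using tendsto_const_nhds.sub h
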